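/- If V : [T*,∞) → [0,∞) is C¹ and satisfies V'(t) ≤ -(l(t)γ₁-γ₂)V(t)^{1/2} - (l(t)γ₃ - (l'(t)/l(t))γ₄)V(t) where l(t) = l(0)+kt with l(0), k, γ₁, γ₂, γ₃, γ₄ > 0 and T* is chosen so both coefficients are ≥ c₁ > 0 and ≥ c₂ > 0 respectively on [T*,∞), then V(t) = 0 for all sufficiently large t. -/

import Mathlib

theorem stmt_16 (l₀ k γ₁ γ₂ γ₃ γ₄ c₁ c₂ Tstar : ℝ)
    (hl₀ : 0 < l₀) (hk : 0 < k) (hγ₁ : 0 < γ₁) (hγ₂ : 0 < γ₂) (hγ₃ : 0 < γ₃) (hγ₄ : 0 < γ₄)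
    (hc₁ : 0 < c₁) (hc₂ : 0 < c₂)
    (hcoef : ∀ t, Tstar ≤ t →
      c₁ ≤ (l₀ + k * t) * γ₁ - γ₂ ∧ c₂ ≤ (l₀ + k * t) * γ₃ - (k / (l₀ + k * t)) * γ₄)
    (V V' : ℝ → ℝ)
    (hVnonneg : ∀ t, Tstar ≤ t → 0 ≤ V t)
    (hderiv : ∀ t, Tstar ≤ t → HasDerivAt V (V' t) t)
    (hineq : ∀ t, Tstar ≤ t →
      V' t ≤ -((l₀ + k * t) * γ₁ - γ₂) * Real.sqrt (V t)
             - ((l₀ + k * t) * γ₃ - (k / (l₀ + k * t)) * γ₄) * V t) :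
    ∃ T' : ℝ, Tstar ≤ T' ∧ ∀ t, T' ≤ t → V t = 0 := by
  set b := Real.sqrt (V Tstar) with hb
  have hb0 : 0 ≤ b := Real.sqrt_nonneg _
  have hq : 0 ≤ 2 * b / c₁ := by positivity
  refine ⟨Tstar + 2 * b / c₁ + 1, by linarith, ?_⟩
  -- V' is nonpositive on [Tstar, ∞)
  have hV'le : ∀ t, Tstar ≤ t → V' t ≤ -c₁ * Real.sqrt (V t) := by
    intro t ht
    have h1 := (hcoef t ht).1
    have h2 := (hcoef t ht).2
    have hs := Real.sqrt_nonneg (V t)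
    have hv := hVnonneg t ht
    calc V' t ≤ -((l₀ + k * t) * γ₁ - γ₂) * Real.sqrt (V t)
             - ((l₀ + k * t) * γ₃ - (k / (l₀ + k * t)) * γ₄) * V t := hineq t ht
      _ ≤ -c₁ * Real.sqrt (V t) - 0 := by
          apply sub_le_sub
          · apply mul_le_mul_of_nonneg_right _ hs; linarith
          · exact mul_nonneg (by linarith) hv
      _ = -c₁ * Real.sqrt (V t) := by ring
  have hV'0 : ∀ t, Tstar ≤ t → V' t ≤ 0 := by
    intro t ht
    have := hV'le t ht
    have hs := Real.sqrt_nonneg (V t)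
    nlinarith
  have hVcont : ContinuousOn V (Set.Ici Tstar) := fun x hx =>
    ((hderiv x hx).continuousAt).continuousWithinAt
  have hVanti : AntitoneOn V (Set.Ici Tstar) := by
    apply antitoneOn_of_hasDerivWithinAt_nonpos (convex_Ici _) hVcont
      (f' := V')
    · intro x hx
      rw [interior_Ici] at hx
      exact ((hderiv x hx.le).hasDerivWithinAt)
    · intro x hx
      rw [interior_Ici] at hx
      exact hV'0 x hx.le
  intro t ht
  have htT : Tstar ≤ t := by linarith
  by_contra hVt
  have hVtpos : 0 < V t := lt_of_le_of_ne (hVnonneg t htT) (Ne.symm hVt)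
  -- on [Tstar, t], V ≥ V t > 0
  have hVpos : ∀ s, Tstar ≤ s → s ≤ t → 0 < V s := by
    intro s hs hst
    exact lt_of_lt_of_le hVtpos (hVanti (Set.mem_Ici.2 hs) (Set.mem_Ici.2 htT) hst)
  -- consider h s = sqrt (V s) + c₁/2 * s, antitone on [Tstar, t]
  have hhanti : AntitoneOn (fun s => Real.sqrt (V s) + c₁ / 2 * s) (Set.Icc Tstar t) := by
    apply antitoneOn_of_hasDerivWithinAt_nonpos (convex_Icc _ _)
      (f' := fun s => V' s / (2 * Real.sqrt (V s)) + c₁ / 2)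
    · apply ContinuousOn.add
      · exact (hVcont.mono (Set.Icc_subset_Ici_self)).sqrt
      · exact (continuous_const.mul continuous_id).continuousOn
    · intro x hx
      rw [interior_Icc] at hx
      have hpos := hVpos x hx.1.le hx.2.le
      have hsq : HasDerivAt (fun s => Real.sqrt (V s)) (V' x / (2 * Real.sqrt (V x))) x := by
        have := (Real.hasDerivAt_sqrt (ne_of_gt hpos)).comp x (hderiv x hx.1.le)
        have e : 1 / (2 * Real.sqrt (V x)) * V' x = V' x / (2 * Real.sqrt (V x)) := by ring
        rw [e] at this
        exact this
      have hsum : HasDerivAt (fun s => Real.sqrt (V s) + c₁ / 2 * s)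
          (V' x / (2 * Real.sqrt (V x)) + c₁ / 2) x := by
        have h2 := hsq.add ((hasDerivAt_id' x).const_mul (c₁ / 2))
        rw [mul_one] at h2
        exact h2
      exact hsum.hasDerivWithinAt
    · intro x hx
      rw [interior_Icc] at hx
      have hpos := hVpos x hx.1.le hx.2.le
      have hspos : 0 < Real.sqrt (V x) := Real.sqrt_pos.2 hpos
      have hle := hV'le x hx.1.le
      have : V' x / (2 * Real.sqrt (V x)) ≤ -c₁ / 2 := by
        rw [div_le_div_iff₀ (by positivity) (by norm_num)]
        nlinarith
      linarith
  have key := hhanti (Set.mem_Icc.2 ⟨le_refl _, htT⟩) (Set.mem_Icc.2 ⟨htT, le_refl _⟩) htT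
  simp only at key
  have hst : 0 ≤ Real.sqrt (V t) := Real.sqrt_nonneg _
  -- key : sqrt (V t) + c₁/2 * t ≤ b + c₁/2 * Tstar
  have : c₁ / 2 * (t - Tstar) ≤ b := by nlinarith
  have htlb : 2 * b / c₁ + 1 ≤ t - Tstar := by linarith
  have : c₁ / 2 * (2 * b / c₁ + 1) ≤ b := le_trans (by nlinarith) this
  have hexp : c₁ / 2 * (2 * b / c₁ + 1) = b + c₁ / 2 := by field_simp
  nlinarith
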